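/- Let A be a nonnegative irreducible n×n tubal matrix that contains at least one strongly positive entry a_{ij} (every real entry of a_{ij} strictly positive). Then every nonzero nonnegative t-eigenvector of A is strongly positive, and any two strongly positive t-eigenvectors corresponding to ρ(A) differ by a positive scalar multiple. -/

import Mathlib

open Finset

/-- The t-product (circular convolution) of real tubal scalars of length `p`. -/
def tConv {p : ℕ} (a b : Fin p → ℝ) : Fin p → ℝ :=
  fun i => ∑ j : Fin p, a j * b (i - j)

/-- The t-product (circular convolution) of complex tubal scalars of length `p`. -/
noncomputable def tConvC {p : ℕ} (a b : Fin p → ℂ) : Fin p → ℂ :=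
  fun i => ∑ j : Fin p, a j * b (i - j)

/-- A tubal scalar is nonnegative if every entry is nonnegative. -/
def TNonneg {p : ℕ} (a : Fin p → ℝ) : Prop := ∀ i, 0 ≤ a i

/-- A tubal scalar is positive if it is nonnegative and not identically zero. -/
def TPos {p : ℕ} (a : Fin p → ℝ) : Prop := TNonneg a ∧ a ≠ 0

/-- A tubal scalar is strongly positive if every entry is strictly positive. -/
def TSPos {p : ℕ} (a : Fin p → ℝ) : Prop := ∀ i, 0 < a i

/-- The product of a tubal matrix and a tubal vector: `(A * X)_i = Σ_j a_{ij} * x_j`. -/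
def tMatVec {n p : ℕ} (A : Fin n → Fin n → Fin p → ℝ) (X : Fin n → Fin p → ℝ) :
    Fin n → Fin p → ℝ :=
  fun i => ∑ j : Fin n, tConv (A i j) (X j)

/-- A tubal matrix is reducible if some nonempty proper index set `I` satisfies
`a_{ij} = 0` for all `i ∈ I`, `j ∉ I`. -/
def TReducible {n p : ℕ} (A : Fin n → Fin n → Fin p → ℝ) : Prop :=
  ∃ I : Finset (Fin n), I.Nonempty ∧ I ≠ Finset.univ ∧ ∀ i ∈ I, ∀ j ∉ I, A i j = 0

/-- The t-spectrum of a real tubal matrix: complex `λ` with `A * X = λ X` for some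
nonzero complex tubal vector `X`. -/
def tSpec {n p : ℕ} (A : Fin n → Fin n → Fin p → ℝ) : Set ℂ :=
  {l | ∃ X : Fin n → Fin p → ℂ, X ≠ 0 ∧
    (fun i => ∑ j : Fin n, tConvC (fun k => (A i j k : ℂ)) (X j)) = l • X}

/-- The spectral radius over all t-eigenvalues. -/
noncomputable def tRho {n p : ℕ} (A : Fin n → Fin n → Fin p → ℝ) : ℝ :=
  sSup ((fun z : ℂ => ‖z‖) '' tSpec A)

-- auxiliary
def edgeRel {n p : ℕ} (A : Fin n → Fin n → Fin p → ℝ) :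
    (Fin n × Fin p) → (Fin n × Fin p) → Prop :=
  fun a b => 0 < A a.1 b.1 (a.2 - b.2)

lemma matvec_apply {n p : ℕ} (A : Fin n → Fin n → Fin p → ℝ) (X : Fin n → Fin p → ℝ)
    (i : Fin n) (k : Fin p) :
    tMatVec A X i k = ∑ j : Fin n, ∑ m : Fin p, A i j m * X j (k - m) := by
  simp [tMatVec, tConv, Finset.sum_apply]

lemma block_reach {n p : ℕ} (A : Fin n → Fin n → Fin p → ℝ) (hirr : ¬ TReducible A)
    (i j : Fin n) : Relation.ReflTransGen (fun a b => A a b ≠ 0) i j := by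
  classical
  by_contra h
  apply hirr
  refine ⟨Finset.univ.filter (fun b => Relation.ReflTransGen (fun a b => A a b ≠ 0) i b),
    ⟨i, mem_filter.mpr ⟨mem_univ i, Relation.ReflTransGen.refl⟩⟩, ?_, ?_⟩
  · intro hEq
    have : j ∈ Finset.univ.filter (fun b => Relation.ReflTransGen (fun a b => A a b ≠ 0) i b) := by
      rw [hEq]; exact mem_univ j
    simp only [mem_filter] at this
    exact h this.2
  · intro a ha b hb
    simp only [mem_filter, mem_univ, true_and] at ha hb
    by_contra hab
    exact hb (ha.tail hab)

lemma lift_fwd {n p : ℕ} [NeZero p] (A : Fin n → Fin n → Fin p → ℝ)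
    (hA : ∀ i j, TNonneg (A i j)) {a b : Fin n}
    (h : Relation.ReflTransGen (fun a b => A a b ≠ 0) a b) :
    ∀ κ : Fin p, ∃ κ', Relation.ReflTransGen (edgeRel A) (a, κ) (b, κ') := by
  induction h using Relation.ReflTransGen.head_induction_on with
  | refl => exact fun κ => ⟨κ, Relation.ReflTransGen.refl⟩
  | head hac _ ih =>
    intro κ
    obtain ⟨m, hm⟩ := Function.ne_iff.mp hac
    obtain ⟨κ', hκ'⟩ := ih (κ - m)
    refine ⟨κ', Relation.ReflTransGen.head ?_ hκ'⟩
    show 0 < A _ _ (κ - (κ - m))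
    rw [sub_sub_cancel]
    exact (hA _ _ m).lt_of_ne fun e => hm e.symm

lemma lift_bwd {n p : ℕ} [NeZero p] (A : Fin n → Fin n → Fin p → ℝ)
    (hA : ∀ i j, TNonneg (A i j)) {a b : Fin n}
    (h : Relation.ReflTransGen (fun a b => A a b ≠ 0) a b) :
    ∀ κ' : Fin p, ∃ κ, Relation.ReflTransGen (edgeRel A) (a, κ) (b, κ') := by
  induction h using Relation.ReflTransGen.head_induction_on with
  | refl => exact fun κ' => ⟨κ', Relation.ReflTransGen.refl⟩
  | head hac _ ih =>
    intro κ'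
    obtain ⟨m, hm⟩ := Function.ne_iff.mp hac
    obtain ⟨κc, hκc⟩ := ih κ'
    refine ⟨κc + m, Relation.ReflTransGen.head ?_ hκc⟩
    show 0 < A _ _ (κc + m - κc)
    rw [add_sub_cancel_left]
    exact (hA _ _ m).lt_of_ne fun e => hm e.symm

lemma strong_conn {n p : ℕ} [NeZero p] (A : Fin n → Fin n → Fin p → ℝ)
    (hA : ∀ i j, TNonneg (A i j)) (hirr : ¬ TReducible A)
    (hsp : ∃ i j, TSPos (A i j)) (a b : Fin n × Fin p) :
    Relation.ReflTransGen (edgeRel A) a b := by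
  obtain ⟨i0, j0, hpos⟩ := hsp
  obtain ⟨i, k⟩ := a
  obtain ⟨j, k'⟩ := b
  obtain ⟨s, h1⟩ := lift_fwd A hA (block_reach A hirr i i0) k
  obtain ⟨t, h3⟩ := lift_bwd A hA (block_reach A hirr j0 j) k'
  exact h1.trans (Relation.ReflTransGen.head
    (show edgeRel A (i0, s) (j0, t) from hpos (s - t)) h3)

lemma zero_prop {n p : ℕ} [NeZero p] (A : Fin n → Fin n → Fin p → ℝ)
    (hA : ∀ i j, TNonneg (A i j)) (X : Fin n → Fin p → ℝ) (l : ℝ)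
    (hnn : ∀ i, TNonneg (X i)) (heig : tMatVec A X = fun i => l • X i)
    {a b : Fin n × Fin p} (h : Relation.ReflTransGen (edgeRel A) a b)
    (h0 : X a.1 a.2 = 0) : X b.1 b.2 = 0 := by
  induction h with
  | refl => exact h0
  | tail _ hedge ih =>
    rename_i c b _
    obtain ⟨i, k⟩ := c
    obtain ⟨j, k'⟩ := b
    have h1 : ∑ j' : Fin n, ∑ m : Fin p, A i j' m * X j' (k - m) = 0 := by
      have := congrFun (congrFun heig i) k
      rw [matvec_apply] at this
      simpa [ih] using this
    have h2 : ∀ j' ∈ (univ : Finset (Fin n)), ∑ m : Fin p, A i j' m * X j' (k - m) = 0 :=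
      (Finset.sum_eq_zero_iff_of_nonneg (fun j' _ =>
        Finset.sum_nonneg fun m _ => mul_nonneg (hA i j' m) (hnn j' _))).mp h1
    have h3 : ∀ m ∈ (univ : Finset (Fin p)), A i j m * X j (k - m) = 0 :=
      (Finset.sum_eq_zero_iff_of_nonneg (fun m _ =>
        mul_nonneg (hA i j m) (hnn j _))).mp (h2 j (mem_univ j))
    have h4 := h3 (k - k') (mem_univ _)
    rw [sub_sub_cancel] at h4
    rcases mul_eq_zero.mp h4 with h5 | h5
    · exact absurd h5 (ne_of_gt hedge)
    · exact h5

lemma part1 {n p : ℕ} [NeZero p] (A : Fin n → Fin n → Fin p → ℝ)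
    (hA : ∀ i j, TNonneg (A i j)) (hirr : ¬ TReducible A)
    (hsp : ∃ i j, TSPos (A i j)) (X : Fin n → Fin p → ℝ) (l : ℝ)
    (hnn : ∀ i, TNonneg (X i)) (hne : X ≠ 0)
    (heig : tMatVec A X = fun i => l • X i) : ∀ i, TSPos (X i) := by
  intro i k
  rcases (hnn i k).lt_or_eq with h | h
  · exact h
  · exfalso
    obtain ⟨j, hj⟩ := Function.ne_iff.mp hne
    obtain ⟨k', hk'⟩ := Function.ne_iff.mp hj
    exact hk' (zero_prop A hA X l hnn heig
      (strong_conn A hA hirr hsp (i, k) (j, k')) h.symm)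

lemma part2 {n p : ℕ} [NeZero p] [NeZero n] (A : Fin n → Fin n → Fin p → ℝ)
    (hA : ∀ i j, TNonneg (A i j)) (hirr : ¬ TReducible A)
    (hsp : ∃ i j, TSPos (A i j)) (r : ℝ) (X Y : Fin n → Fin p → ℝ)
    (hX' : ∀ i, TSPos (X i)) (hY' : ∀ i, TSPos (Y i))
    (hX : tMatVec A X = fun i => r • X i) (hY : tMatVec A Y = fun i => r • Y i) :
    ∃ c : ℝ, 0 < c ∧ X = fun i k => c * Y i k := by
  classical
  obtain ⟨q0, -, hq0⟩ := Finset.exists_min_image (Finset.univ : Finset (Fin n × Fin p))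
    (fun q => X q.1 q.2 / Y q.1 q.2) ⟨(0, 0), mem_univ _⟩
  set c : ℝ := X q0.1 q0.2 / Y q0.1 q0.2 with hc_def
  have hc : 0 < c := div_pos (hX' q0.1 q0.2) (hY' q0.1 q0.2)
  set Z : Fin n → Fin p → ℝ := fun i k => X i k - c * Y i k with hZ_def
  have hZnn : ∀ i, TNonneg (Z i) := by
    intro i k
    have h1 : c ≤ X i k / Y i k := hq0 (i, k) (mem_univ _)
    have h2 : c * Y i k ≤ X i k := (le_div_iff₀ (hY' i k)).mp h1
    simpa [Z] using sub_nonneg.mpr h2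
  have hZ0 : Z q0.1 q0.2 = 0 := by
    simp only [Z, hc_def]
    rw [div_mul_cancel₀ _ (ne_of_gt (hY' q0.1 q0.2))]
    ring
  have hZeig : tMatVec A Z = fun i => r • Z i := by
    funext i k
    have hx := congrFun (congrFun hX i) k
    have hy := congrFun (congrFun hY i) k
    rw [matvec_apply] at hx hy
    simp only [Pi.smul_apply, smul_eq_mul] at hx hy
    rw [matvec_apply]
    simp only [Pi.smul_apply, smul_eq_mul, Z]
    calc ∑ j : Fin n, ∑ m : Fin p, A i j m * (X j (k - m) - c * Y j (k - m))
        = ∑ j : Fin n, ∑ m : Fin p,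
            (A i j m * X j (k - m) - c * (A i j m * Y j (k - m))) :=
          Finset.sum_congr rfl fun j _ => Finset.sum_congr rfl fun m _ => by ring
      _ = (∑ j : Fin n, ∑ m : Fin p, A i j m * X j (k - m))
            - c * ∑ j : Fin n, ∑ m : Fin p, A i j m * Y j (k - m) := by
          rw [Finset.mul_sum, ← Finset.sum_sub_distrib]
          refine Finset.sum_congr rfl fun j _ => ?_
          rw [Finset.mul_sum, ← Finset.sum_sub_distrib]
      _ = r * X i k - c * (r * Y i k) := by rw [hx, hy]
      _ = r * (X i k - c * Y i k) := by ring
  have hZzero : Z = 0 := by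
    by_contra hne
    have := part1 A hA hirr hsp Z r hZnn hne hZeig q0.1 q0.2
    rw [hZ0] at this
    exact lt_irrefl 0 this
  refine ⟨c, hc, funext fun i => funext fun k => ?_⟩
  have := congrFun (congrFun hZzero i) k
  simp only [Z, Pi.zero_apply] at this
  linarith


/-- Let `A` be nonnegative irreducible containing at least one strongly positive
entry. Then every nonzero nonnegative t-eigenvector of `A` is strongly positive,
and any two strongly positive t-eigenvectors for `ρ(A)` differ by a positive
scalar multiple. -/
theorem enhanced_pf {n p : ℕ} (A : Fin n → Fin n → Fin p → ℝ)
    (hA : ∀ i j, TNonneg (A i j)) (hirr : ¬ TReducible A)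
    (hsp : ∃ i j, TSPos (A i j)) :
    (∀ (X : Fin n → Fin p → ℝ) (l : ℝ), (∀ i, TNonneg (X i)) → X ≠ 0 →
        tMatVec A X = (fun i => l • X i) → ∀ i, TSPos (X i)) ∧
    (∀ X Y : Fin n → Fin p → ℝ, (∀ i, TSPos (X i)) → (∀ i, TSPos (Y i)) →
        tMatVec A X = (fun i => tRho A • X i) → tMatVec A Y = (fun i => tRho A • Y i) →
        ∃ c : ℝ, 0 < c ∧ X = fun i k => c * Y i k) := by
  rcases Nat.eq_zero_or_pos p with hp | hp
  · subst hp
    constructor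
    · intro X l _ _ _ i k; exact k.elim0
    · intro X Y _ _ _ _
      exact ⟨1, one_pos, funext fun i => funext fun k => k.elim0⟩
  · haveI : NeZero p := ⟨hp.ne'⟩
    constructor
    · exact fun X l hnn hne heig => part1 A hA hirr hsp X l hnn hne heig
    · intro X Y hX' hY' hX hY
      rcases Nat.eq_zero_or_pos n with hn | hn
      · subst hn
        exact ⟨1, one_pos, funext fun i => i.elim0⟩
      · haveI : NeZero n := ⟨hn.ne'⟩
        exact part2 A hA hirr hsp (tRho A) X Y hX' hY' hX hY
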